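/- arXiv:1905.10185 — 3 statements merged into one kernel-verified Lean document; each statement's English description precedes it below -/
import Mathlib

section
/- For every real number a0, every nonzero vector a = (a1, a2, a3) in ℝ³, and every real β, the matrix exponential of β(a0·σ0 + a1·σ1 + a2·σ2 + a3·σ3) equals e^{β a0} · ( cosh(β|a|)·σ0 + (sinh(β|a|)/|a|)·(a1·σ1 + a2·σ2 + a3·σ3) ), where |a| denotes the Euclidean norm of a. -/
open scoped Nat
set_option maxHeartbeats 1000000

open NormedSpace in
lemma exp_smul_idem {𝔸 : Type*} [NormedRing 𝔸] [NormedAlgebra ℂ 𝔸] [CompleteSpace 𝔸]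
    (P : 𝔸) (hP : P * P = P) (a : ℂ) :
    exp (a • P) = 1 + (Complex.exp a - 1) • P := by
  have hPn : ∀ n : ℕ, P ^ (n + 1) = P := by
    intro n; induction n with
    | zero => simp
    | succ n ih => rw [pow_succ, ih, hP]
  have hsC : Summable fun n : ℕ => ((n ! : ℂ))⁻¹ • a ^ n := expSeries_summable' (𝕂 := ℂ) a
  have hsC' : Summable fun n : ℕ => (((n+1)! : ℂ))⁻¹ • a ^ (n+1) :=
    (summable_nat_add_iff 1).2 hsC
  have hexp : Complex.exp a = 1 + ∑' n : ℕ, (((n+1)! : ℂ))⁻¹ • a ^ (n+1) := by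
    rw [Complex.exp_eq_exp_ℂ, exp_eq_tsum ℂ]
    dsimp only
    rw [Summable.tsum_eq_zero_add hsC]
    simp
  have hs : Summable fun n : ℕ => ((n ! : ℂ))⁻¹ • (a • P) ^ n := expSeries_summable' (𝕂 := ℂ) _
  rw [exp_eq_tsum ℂ]
  dsimp only
  rw [Summable.tsum_eq_zero_add hs]
  have h0 : ((0 ! : ℂ))⁻¹ • (a • P) ^ 0 = 1 := by simp
  rw [h0]
  congr 1
  have hterm : ∀ n : ℕ, (((n+1)! : ℂ))⁻¹ • (a • P) ^ (n+1)
      = ((((n+1)! : ℂ))⁻¹ • a ^ (n+1)) • P := by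
    intro n
    rw [smul_pow, hPn, smul_smul, smul_eq_mul]
  simp only [hterm]
  rw [Summable.tsum_smul_const hsC', hexp, add_sub_cancel_left]

open NormedSpace in
lemma Matrix.exp_smul_idem_fin2 (P : Matrix (Fin 2) (Fin 2) ℂ) (hP : P * P = P) (a : ℂ) :
    exp (a • P) = 1 + (Complex.exp a - 1) • P := by
  letI : SeminormedRing (Matrix (Fin 2) (Fin 2) ℂ) := Matrix.linftyOpSemiNormedRing
  letI : NormedRing (Matrix (Fin 2) (Fin 2) ℂ) := Matrix.linftyOpNormedRing
  letI : NormedAlgebra ℂ (Matrix (Fin 2) (Fin 2) ℂ) := Matrix.linftyOpNormedAlgebra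
  exact exp_smul_idem P hP a



/-- The Pauli matrices σ0, σ1, σ2, σ3 as 2×2 complex matrices. -/
noncomputable def pauli : Fin 4 → Matrix (Fin 2) (Fin 2) ℂ :=
  ![!![1, 0; 0, 1], !![0, 1; 1, 0], !![0, -Complex.I; Complex.I, 0], !![1, 0; 0, -1]]

/-- For every real `a0`, every nonzero `(a1,a2,a3) ∈ ℝ³` and every real `β`,
the matrix exponential of `β(a0·σ0 + a1·σ1 + a2·σ2 + a3·σ3)` equals
`e^{β a0}(cosh(β|a|)·σ0 + (sinh(β|a|)/|a|)·(a1·σ1 + a2·σ2 + a3·σ3))`. -/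
theorem pauli_exponential (a0 a1 a2 a3 β : ℝ)
    (ha : (a1, a2, a3) ≠ (0, 0, 0)) :
    NormedSpace.exp
        ((β : ℂ) • ((a0 : ℂ) • pauli 0 + (a1 : ℂ) • pauli 1 + (a2 : ℂ) • pauli 2
          + (a3 : ℂ) • pauli 3)) =
      (Real.exp (β * a0) : ℂ) •
        ((Real.cosh (β * Real.sqrt (a1 ^ 2 + a2 ^ 2 + a3 ^ 2)) : ℂ) • pauli 0 +
          ((Real.sinh (β * Real.sqrt (a1 ^ 2 + a2 ^ 2 + a3 ^ 2)) /
              Real.sqrt (a1 ^ 2 + a2 ^ 2 + a3 ^ 2) : ℝ) : ℂ) •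
            ((a1 : ℂ) • pauli 1 + (a2 : ℂ) • pauli 2 + (a3 : ℂ) • pauli 3)) := by
  have hsum : 0 < a1 ^ 2 + a2 ^ 2 + a3 ^ 2 := by
    rcases show a1 ≠ 0 ∨ a2 ≠ 0 ∨ a3 ≠ 0 by
      by_contra h; push_neg at h; exact ha (by simp [h.1, h.2.1, h.2.2]) with h | h | h <;>
      positivity
  set r : ℝ := Real.sqrt (a1 ^ 2 + a2 ^ 2 + a3 ^ 2) with hrdef
  have hr0 : 0 < r := Real.sqrt_pos.2 hsum
  have hrne : (r : ℂ) ≠ 0 := by exact_mod_cast hr0.ne'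
  have hp0 : pauli 0 = (1 : Matrix (Fin 2) (Fin 2) ℂ) := by
    ext i j
    fin_cases i <;> fin_cases j <;> simp [pauli, Matrix.one_fin_two]
  set A : Matrix (Fin 2) (Fin 2) ℂ := (a1 : ℂ) • pauli 1 + (a2 : ℂ) • pauli 2 + (a3 : ℂ) • pauli 3 with hAdef
  have hAA : A * A = ((r : ℂ) ^ 2) • 1 := by
    have h' : r ^ 2 = a1 ^ 2 + a2 ^ 2 + a3 ^ 2 := Real.sq_sqrt hsum.le
    have hr2 : ((r : ℂ) ^ 2) = ((a1:ℂ)^2 + (a2:ℂ)^2 + (a3:ℂ)^2) := by exact_mod_cast h'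
    rw [hr2]
    ext i j
    fin_cases i <;> fin_cases j <;>
      simp [hAdef, pauli, Matrix.mul_fin_two, Matrix.one_fin_two, Matrix.smul_apply, Complex.I_sq] <;> ring_nf <;> simp [Complex.I_sq] <;> ring
  set U : Matrix (Fin 2) (Fin 2) ℂ := (r : ℂ)⁻¹ • A with hUdef
  have hUU : U * U = 1 := by
    rw [hUdef, smul_mul_smul_comm, hAA, smul_smul]
    rw [show ((r:ℂ)⁻¹ * (r:ℂ)⁻¹) * (r:ℂ)^2 = 1 by field_simp, one_smul]
  set P : Matrix (Fin 2) (Fin 2) ℂ := (2⁻¹ : ℂ) • (1 + U) with hPdef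
  set Q : Matrix (Fin 2) (Fin 2) ℂ := (2⁻¹ : ℂ) • (1 - U) with hQdef
  have hPP : P * P = P := by
    rw [hPdef, smul_mul_smul_comm]
    have h1 : (1 + U) * ((1 : Matrix (Fin 2) (Fin 2) ℂ) + U) = (2 : ℂ) • (1 + U) := by
      simp only [mul_add, add_mul, one_mul, mul_one, hUU]; module
    rw [h1, smul_smul]; norm_num
  have hQQ : Q * Q = Q := by
    rw [hQdef, smul_mul_smul_comm]
    have h1 : (1 - U) * ((1 : Matrix (Fin 2) (Fin 2) ℂ) - U) = (2 : ℂ) • (1 - U) := by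
      simp only [mul_sub, sub_mul, one_mul, mul_one, hUU]; module
    rw [h1, smul_smul]; norm_num
  have hPQ : P * Q = 0 := by
    rw [hPdef, hQdef, smul_mul_smul_comm]
    have h1 : (1 + U) * ((1 : Matrix (Fin 2) (Fin 2) ℂ) - U) = 0 := by
      simp only [mul_sub, add_mul, one_mul, mul_one, hUU]; module
    rw [h1, smul_zero]
  have hQP : Q * P = 0 := by
    rw [hPdef, hQdef, smul_mul_smul_comm]
    have h1 : (1 - U) * ((1 : Matrix (Fin 2) (Fin 2) ℂ) + U) = 0 := by
      simp only [mul_add, sub_mul, one_mul, mul_one, hUU]; module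
    rw [h1, smul_zero]
  set c : ℂ := ((β * a0 : ℝ) : ℂ) with hcdef
  set x : ℂ := ((β * r : ℝ) : ℂ) with hxdef
  have hX : (β : ℂ) • ((a0 : ℂ) • pauli 0 + (a1 : ℂ) • pauli 1 + (a2 : ℂ) • pauli 2
      + (a3 : ℂ) • pauli 3) = c • (1 : Matrix (Fin 2) (Fin 2) ℂ) + (x • P + (-x) • Q) := by
    rw [hp0, hPdef, hQdef, hUdef, hAdef, hcdef, hxdef]
    push_cast
    match_scalars <;> field_simp <;> ring
  rw [hX]
  have hc1 : Commute (c • (1 : Matrix (Fin 2) (Fin 2) ℂ)) (x • P + (-x) • Q) :=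
    ((Commute.one_left _).smul_left c)
  have hPQc : Commute P Q := hPQ.trans hQP.symm
  have hcPQ : Commute (x • P) ((-x) • Q) := (hPQc.smul_left x).smul_right (-x)
  rw [Matrix.exp_add_of_commute _ _ hc1, Matrix.exp_add_of_commute _ _ hcPQ]
  rw [Matrix.exp_smul_idem_fin2 (1 : Matrix (Fin 2) (Fin 2) ℂ) (by simp) c, Matrix.exp_smul_idem_fin2 P hPP x,
    Matrix.exp_smul_idem_fin2 Q hQQ (-x)]
  have hone : (1 : Matrix (Fin 2) (Fin 2) ℂ) + (Complex.exp c - 1) • 1 = Complex.exp c • 1 := by module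
  have hprod : ((1 : Matrix (Fin 2) (Fin 2) ℂ) + (Complex.exp x - 1) • P) * (1 + (Complex.exp (-x) - 1) • Q)
      = 1 + (Complex.exp x - 1) • P + (Complex.exp (-x) - 1) • Q := by
    simp only [mul_add, add_mul, one_mul, mul_one, smul_mul_smul_comm, hPQ, smul_zero]
    abel
  rw [hone, hprod, smul_mul_assoc, one_mul]
  have hexpc : ((Real.exp (β * a0) : ℝ) : ℂ) = Complex.exp c := by
    rw [hcdef, Complex.ofReal_exp]
  have hch : ((Real.cosh (β * r) : ℝ) : ℂ) = (Complex.exp x + Complex.exp (-x)) / 2 := by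
    rw [Real.cosh_eq, hxdef]; push_cast; ring
  have hsh : ((Real.sinh (β * r) : ℝ) : ℂ) = (Complex.exp x - Complex.exp (-x)) / 2 := by
    rw [Real.sinh_eq, hxdef]; push_cast; ring
  rw [hp0, Complex.ofReal_div, hexpc, hch, hsh]
  simp only [hPdef, hQdef, hUdef]
  match_scalars <;> field_simp <;> ring
end

section
/- Let a0 ∈ ℝ and a = (a1,a2,a3) ∈ ℝ³ nonzero be constants, and let Y0 : ℝ → ℝ and Y : ℝ → ℝ³ be continuous. Then the functions x0(β) = ∫₀^β e^{(β−λ)a0}·[ cosh((β−λ)|a|)·Y0(λ) + sinh((β−λ)|a|)·(a/|a|)·Y(λ) ] dλ and x(β) = ∫₀^β e^{(β−λ)a0}·[ sinh((β−λ)|a|)·Y0(λ)·(a/|a|) + ( (cosh((β−λ)|a|) − 1)·(a⊗a/|a|²) + I₃ )·Y(λ) ] dλ are differentiable, vanish at β = 0, and satisfy for all β: x0'(β) = a0·x0(β) + a·x(β) + Y0(β) and x'(β) = a0·x(β) + x0(β)·a + Y(β). -/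
open intervalIntegral MeasureTheory

private lemma deriv_int (f : ℝ → ℝ) (hf : Continuous f) (β : ℝ) :
    HasDerivAt (fun b => ∫ l in (0:ℝ)..b, f l) (f β) β :=
  intervalIntegral.integral_hasDerivAt_right (hf.intervalIntegrable _ _)
    (hf.stronglyMeasurableAtFilter _ _) hf.continuousAt

private lemma int_lin3 (β c1 c2 c3 : ℝ) (f1 f2 f3 : ℝ → ℝ)
    (h1 : Continuous f1) (h2 : Continuous f2) (h3 : Continuous f3) :
    (∫ l in (0:ℝ)..β, (c1 * f1 l + c2 * f2 l + c3 * f3 l))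
      = c1 * (∫ l in (0:ℝ)..β, f1 l) + c2 * (∫ l in (0:ℝ)..β, f2 l)
        + c3 * (∫ l in (0:ℝ)..β, f3 l) := by
  have i1 : IntervalIntegrable (fun l => c1 * f1 l) volume 0 β := (continuous_const.mul h1).intervalIntegrable 0 β
  have i2 : IntervalIntegrable (fun l => c2 * f2 l) volume 0 β := (continuous_const.mul h2).intervalIntegrable 0 β
  have i3 : IntervalIntegrable (fun l => c3 * f3 l) volume 0 β := (continuous_const.mul h3).intervalIntegrable 0 β
  rw [intervalIntegral.integral_add (i1.add i2) i3, intervalIntegral.integral_add i1 i2,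
    intervalIntegral.integral_const_mul, intervalIntegral.integral_const_mul,
    intervalIntegral.integral_const_mul]

private lemma int_lin4 (β c1 c2 c3 c4 : ℝ) (f1 f2 f3 f4 : ℝ → ℝ)
    (h1 : Continuous f1) (h2 : Continuous f2) (h3 : Continuous f3) (h4 : Continuous f4) :
    (∫ l in (0:ℝ)..β, (c1 * f1 l + c2 * f2 l + c3 * f3 l + c4 * f4 l))
      = c1 * (∫ l in (0:ℝ)..β, f1 l) + c2 * (∫ l in (0:ℝ)..β, f2 l)
        + c3 * (∫ l in (0:ℝ)..β, f3 l) + c4 * (∫ l in (0:ℝ)..β, f4 l) := by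
  have i1 : IntervalIntegrable (fun l => c1 * f1 l) volume 0 β := (continuous_const.mul h1).intervalIntegrable 0 β
  have i2 : IntervalIntegrable (fun l => c2 * f2 l) volume 0 β := (continuous_const.mul h2).intervalIntegrable 0 β
  have i3 : IntervalIntegrable (fun l => c3 * f3 l) volume 0 β := (continuous_const.mul h3).intervalIntegrable 0 β
  have i4 : IntervalIntegrable (fun l => c4 * f4 l) volume 0 β := (continuous_const.mul h4).intervalIntegrable 0 β
  rw [intervalIntegral.integral_add ((i1.add i2).add i3) i4,
    intervalIntegral.integral_add (i1.add i2) i3, intervalIntegral.integral_add i1 i2,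
    intervalIntegral.integral_const_mul, intervalIntegral.integral_const_mul,
    intervalIntegral.integral_const_mul, intervalIntegral.integral_const_mul]

private lemma int_lin6 (β c1 c2 c3 c4 c5 c6 : ℝ) (f1 f2 f3 f4 f5 f6 : ℝ → ℝ)
    (h1 : Continuous f1) (h2 : Continuous f2) (h3 : Continuous f3) (h4 : Continuous f4)
    (h5 : Continuous f5) (h6 : Continuous f6) :
    (∫ l in (0:ℝ)..β, (c1 * f1 l + c2 * f2 l + c3 * f3 l + c4 * f4 l + c5 * f5 l + c6 * f6 l))
      = c1 * (∫ l in (0:ℝ)..β, f1 l) + c2 * (∫ l in (0:ℝ)..β, f2 l)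
        + c3 * (∫ l in (0:ℝ)..β, f3 l) + c4 * (∫ l in (0:ℝ)..β, f4 l)
        + c5 * (∫ l in (0:ℝ)..β, f5 l) + c6 * (∫ l in (0:ℝ)..β, f6 l) := by
  have i1 : IntervalIntegrable (fun l => c1 * f1 l) volume 0 β := (continuous_const.mul h1).intervalIntegrable 0 β
  have i2 : IntervalIntegrable (fun l => c2 * f2 l) volume 0 β := (continuous_const.mul h2).intervalIntegrable 0 β
  have i3 : IntervalIntegrable (fun l => c3 * f3 l) volume 0 β := (continuous_const.mul h3).intervalIntegrable 0 β
  have i4 : IntervalIntegrable (fun l => c4 * f4 l) volume 0 β := (continuous_const.mul h4).intervalIntegrable 0 β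
  have i5 : IntervalIntegrable (fun l => c5 * f5 l) volume 0 β := (continuous_const.mul h5).intervalIntegrable 0 β
  have i6 : IntervalIntegrable (fun l => c6 * f6 l) volume 0 β := (continuous_const.mul h6).intervalIntegrable 0 β
  rw [intervalIntegral.integral_add ((((i1.add i2).add i3).add i4).add i5) i6,
    intervalIntegral.integral_add (((i1.add i2).add i3).add i4) i5,
    intervalIntegral.integral_add ((i1.add i2).add i3) i4,
    intervalIntegral.integral_add (i1.add i2) i3, intervalIntegral.integral_add i1 i2,
    intervalIntegral.integral_const_mul, intervalIntegral.integral_const_mul,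
    intervalIntegral.integral_const_mul, intervalIntegral.integral_const_mul,
    intervalIntegral.integral_const_mul, intervalIntegral.integral_const_mul]

/-- the Duhamel (variation-of-constants) formulas built from the semigroup
`S_a(β)` vanish at `β = 0` and solve the inhomogeneous linear system
`x0' = a0 x0 + a·x + Y0`, `x' = a0 x + x0 a + Y`. -/
theorem duhamel_solution (a0 : ℝ) (a : Fin 3 → ℝ) (ha : a ≠ 0)
    (Y0 : ℝ → ℝ) (Y : ℝ → Fin 3 → ℝ) (hY0 : Continuous Y0) (hY : Continuous Y) :
    let na : ℝ := Real.sqrt (a 0 ^ 2 + a 1 ^ 2 + a 2 ^ 2)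
    let x0 : ℝ → ℝ := fun β =>
      ∫ l in (0 : ℝ)..β, Real.exp ((β - l) * a0) *
        (Real.cosh ((β - l) * na) * Y0 l
          + Real.sinh ((β - l) * na) * ∑ i, (a i / na) * Y l i)
    let x : ℝ → Fin 3 → ℝ := fun β i =>
      ∫ l in (0 : ℝ)..β, Real.exp ((β - l) * a0) *
        (Real.sinh ((β - l) * na) * Y0 l * (a i / na)
          + ((Real.cosh ((β - l) * na) - 1) * (a i / na ^ 2) * (∑ j, a j * Y l j) + Y l i))
    (x0 0 = 0) ∧ (∀ i, x 0 i = 0) ∧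
    (∀ β : ℝ, HasDerivAt x0 (a0 * x0 β + (∑ i, a i * x β i) + Y0 β) β) ∧
    (∀ β : ℝ, ∀ i : Fin 3, HasDerivAt (fun b => x b i) (a0 * x β i + x0 β * a i + Y β i) β) := by
  intro na x0 x
  have h2 : (0:ℝ) < a 0 ^ 2 + a 1 ^ 2 + a 2 ^ 2 := by
    rcases Function.ne_iff.mp ha with ⟨i, hi⟩
    fin_cases i <;> simp at hi <;> positivity
  have hna : 0 < na := Real.sqrt_pos.mpr h2
  have hna' : na ≠ 0 := hna.ne'
  have hna2 : na ^ 2 = a 0 ^ 2 + a 1 ^ 2 + a 2 ^ 2 := Real.sq_sqrt h2.le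
  -- normalized direction
  set b : Fin 3 → ℝ := fun i => a i / na with hbdef
  have hb : ∀ i, a i = na * b i := by
    intro i; simp only [hbdef]; field_simp
  have hbsq : b 0 ^ 2 + b 1 ^ 2 + b 2 ^ 2 = 1 := by
    simp only [hbdef]; field_simp; linarith [hna2]
  -- component continuity
  have hYi : ∀ i, Continuous fun l => Y l i := fun i => (continuous_apply i).comp hY
  set S : ℝ → ℝ := fun l => ∑ i, (a i / na) * Y l i with hSdef
  have hS : Continuous S := by
    rw [hSdef]; exact continuous_finset_sum _ fun i _ => continuous_const.mul (hYi i)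
  set g1 : ℝ → ℝ := fun l => Real.exp (-(l * a0)) * (Real.cosh (l * na) * Y0 l) with hg1def
  set g2 : ℝ → ℝ := fun l => Real.exp (-(l * a0)) * (Real.sinh (l * na) * Y0 l) with hg2def
  set g3 : ℝ → ℝ := fun l => Real.exp (-(l * a0)) * (Real.cosh (l * na) * S l) with hg3def
  set g4 : ℝ → ℝ := fun l => Real.exp (-(l * a0)) * (Real.sinh (l * na) * S l) with hg4def
  set g0 : ℝ → ℝ := fun l => Real.exp (-(l * a0)) * S l with hg0def
  set k : Fin 3 → ℝ → ℝ := fun i l => Real.exp (-(l * a0)) * Y l i with hkdef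
  have hp : Continuous fun l : ℝ => Real.exp (-(l * a0)) := by fun_prop
  have hco : Continuous fun l : ℝ => Real.cosh (l * na) := by fun_prop
  have hsi : Continuous fun l : ℝ => Real.sinh (l * na) := by fun_prop
  have hg1 : Continuous g1 := by rw [hg1def]; exact hp.mul (hco.mul hY0)
  have hg2 : Continuous g2 := by rw [hg2def]; exact hp.mul (hsi.mul hY0)
  have hg3 : Continuous g3 := by rw [hg3def]; exact hp.mul (hco.mul hS)
  have hg4 : Continuous g4 := by rw [hg4def]; exact hp.mul (hsi.mul hS)
  have hg0 : Continuous g0 := by rw [hg0def]; exact hp.mul hS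
  have hk : ∀ i, Continuous (k i) := by
    intro i; rw [hkdef]; exact hp.mul (hYi i)
  set G1 : ℝ → ℝ := fun β => ∫ l in (0:ℝ)..β, g1 l with hG1def
  set G2 : ℝ → ℝ := fun β => ∫ l in (0:ℝ)..β, g2 l with hG2def
  set G3 : ℝ → ℝ := fun β => ∫ l in (0:ℝ)..β, g3 l with hG3def
  set G4 : ℝ → ℝ := fun β => ∫ l in (0:ℝ)..β, g4 l with hG4def
  set G0 : ℝ → ℝ := fun β => ∫ l in (0:ℝ)..β, g0 l with hG0def
  set K : Fin 3 → ℝ → ℝ := fun i β => ∫ l in (0:ℝ)..β, k i l with hKdef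
  -- the key exponential splitting
  have he : ∀ β l : ℝ, Real.exp ((β - l) * a0) = Real.exp (β * a0) * Real.exp (-(l * a0)) := by
    intro β l; rw [← Real.exp_add]; ring_nf
  have hT : ∀ l, (∑ j, a j * Y l j) = na * S l := by
    intro l
    rw [hSdef, Finset.mul_sum]
    refine Finset.sum_congr rfl fun j _ => ?_
    field_simp
  -- closed form for x0
  have hx0cf : ∀ β, x0 β =
      Real.exp (β * a0) * Real.cosh (β * na) * G1 β
        + (-(Real.exp (β * a0) * Real.sinh (β * na))) * G2 β
        + Real.exp (β * a0) * Real.sinh (β * na) * G3 β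
        + (-(Real.exp (β * a0) * Real.cosh (β * na))) * G4 β := by
    intro β
    have hptw : ∀ l, Real.exp ((β - l) * a0) *
        (Real.cosh ((β - l) * na) * Y0 l + Real.sinh ((β - l) * na) * S l)
        = Real.exp (β * a0) * Real.cosh (β * na) * g1 l
          + (-(Real.exp (β * a0) * Real.sinh (β * na))) * g2 l
          + Real.exp (β * a0) * Real.sinh (β * na) * g3 l
          + (-(Real.exp (β * a0) * Real.cosh (β * na))) * g4 l := by
      intro l
      rw [he β l, show (β - l) * na = β * na - l * na by ring, Real.cosh_sub, Real.sinh_sub,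
        hg1def, hg2def, hg3def, hg4def]
      ring
    calc x0 β = ∫ l in (0:ℝ)..β,
        (Real.exp (β * a0) * Real.cosh (β * na) * g1 l
          + (-(Real.exp (β * a0) * Real.sinh (β * na))) * g2 l
          + Real.exp (β * a0) * Real.sinh (β * na) * g3 l
          + (-(Real.exp (β * a0) * Real.cosh (β * na))) * g4 l) :=
        intervalIntegral.integral_congr fun l _ => hptw l
      _ = _ := int_lin4 β _ _ _ _ _ _ _ _ hg1 hg2 hg3 hg4
  -- closed form for x
  have hxcf : ∀ β i, x β i =
      Real.exp (β * a0) * Real.sinh (β * na) * b i * G1 β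
        + (-(Real.exp (β * a0) * Real.cosh (β * na) * b i)) * G2 β
        + Real.exp (β * a0) * Real.cosh (β * na) * b i * G3 β
        + (-(Real.exp (β * a0) * Real.sinh (β * na) * b i)) * G4 β
        + (-(Real.exp (β * a0) * b i)) * G0 β
        + Real.exp (β * a0) * K i β := by
    intro β i
    have hptw : ∀ l, Real.exp ((β - l) * a0) *
        (Real.sinh ((β - l) * na) * Y0 l * (a i / na)
          + ((Real.cosh ((β - l) * na) - 1) * (a i / na ^ 2) * (∑ j, a j * Y l j) + Y l i))
        = Real.exp (β * a0) * Real.sinh (β * na) * b i * g1 l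
          + (-(Real.exp (β * a0) * Real.cosh (β * na) * b i)) * g2 l
          + Real.exp (β * a0) * Real.cosh (β * na) * b i * g3 l
          + (-(Real.exp (β * a0) * Real.sinh (β * na) * b i)) * g4 l
          + (-(Real.exp (β * a0) * b i)) * g0 l
          + Real.exp (β * a0) * k i l := by
      intro l
      rw [hT l, he β l, show (β - l) * na = β * na - l * na by ring, Real.cosh_sub,
        Real.sinh_sub, hg1def, hg2def, hg3def, hg4def, hg0def, hkdef, hbdef]
      field_simp
      ring
    calc x β i = ∫ l in (0:ℝ)..β,
        (Real.exp (β * a0) * Real.sinh (β * na) * b i * g1 l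
          + (-(Real.exp (β * a0) * Real.cosh (β * na) * b i)) * g2 l
          + Real.exp (β * a0) * Real.cosh (β * na) * b i * g3 l
          + (-(Real.exp (β * a0) * Real.sinh (β * na) * b i)) * g4 l
          + (-(Real.exp (β * a0) * b i)) * g0 l
          + Real.exp (β * a0) * k i l) :=
        intervalIntegral.integral_congr fun l _ => hptw l
      _ = _ := int_lin6 β _ _ _ _ _ _ _ _ _ _ _ _ hg1 hg2 hg3 hg4 hg0 (hk i)
  -- relation between the K's and G0
  have hsumK : ∀ β, b 0 * K 0 β + b 1 * K 1 β + b 2 * K 2 β = G0 β := by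
    intro β
    have hptw : ∀ l, b 0 * k 0 l + b 1 * k 1 l + b 2 * k 2 l = g0 l := by
      intro l
      rw [hkdef, hg0def, hSdef, hbdef]
      simp [Fin.sum_univ_three]
      ring
    calc b 0 * K 0 β + b 1 * K 1 β + b 2 * K 2 β
        = ∫ l in (0:ℝ)..β, (b 0 * k 0 l + b 1 * k 1 l + b 2 * k 2 l) :=
          (int_lin3 β _ _ _ _ _ _ (hk 0) (hk 1) (hk 2)).symm
      _ = G0 β := intervalIntegral.integral_congr fun l _ => hptw l
  -- derivative facts
  have hG1d : ∀ β, HasDerivAt G1 (g1 β) β := fun β => deriv_int g1 hg1 β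
  have hG2d : ∀ β, HasDerivAt G2 (g2 β) β := fun β => deriv_int g2 hg2 β
  have hG3d : ∀ β, HasDerivAt G3 (g3 β) β := fun β => deriv_int g3 hg3 β
  have hG4d : ∀ β, HasDerivAt G4 (g4 β) β := fun β => deriv_int g4 hg4 β
  have hG0d : ∀ β, HasDerivAt G0 (g0 β) β := fun β => deriv_int g0 hg0 β
  have hKd : ∀ i β, HasDerivAt (K i) (k i β) β := fun i β => deriv_int (k i) (hk i) β
  have hEd : ∀ β : ℝ, HasDerivAt (fun t => Real.exp (t * a0)) (Real.exp (β * a0) * (1 * a0)) β :=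
    fun β => ((hasDerivAt_id β).mul_const a0).exp
  have hCd : ∀ β : ℝ, HasDerivAt (fun t => Real.cosh (t * na)) (Real.sinh (β * na) * (1 * na)) β :=
    fun β => ((hasDerivAt_id β).mul_const na).cosh
  have hSd : ∀ β : ℝ, HasDerivAt (fun t => Real.sinh (t * na)) (Real.cosh (β * na) * (1 * na)) β :=
    fun β => ((hasDerivAt_id β).mul_const na).sinh
  have hE1 : ∀ β : ℝ, Real.exp (β * a0) * Real.exp (-(β * a0)) = 1 := by
    intro β; rw [← Real.exp_add]; simp
  have hch : ∀ β : ℝ, Real.cosh (β * na) ^ 2 - Real.sinh (β * na) ^ 2 = 1 :=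
    fun β => Real.cosh_sq_sub_sinh_sq (β * na)
  refine ⟨intervalIntegral.integral_same, fun i => intervalIntegral.integral_same, ?_, ?_⟩
  · -- derivative of x0
    intro β
    have hD := (((((hEd β).mul (hCd β)).mul (hG1d β)).add
        ((((hEd β).mul (hSd β)).neg).mul (hG2d β))).add
        (((hEd β).mul (hSd β)).mul (hG3d β))).add
        ((((hEd β).mul (hCd β)).neg).mul (hG4d β))
    have hx0d := hD.congr_of_eventuallyEq (Filter.Eventually.of_forall hx0cf)
    convert hx0d using 1
    case e'_4 => rfl
    case e'_5 => rfl
    rw [Fin.sum_univ_three, hx0cf β, hxcf β 0, hxcf β 1, hxcf β 2, hb 0, hb 1, hb 2]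
    simp only [hg1def, hg2def, hg3def, hg4def, Pi.mul_apply, Pi.neg_apply]
    linear_combination
      (na * Real.exp (β * a0) * (Real.sinh (β * na) * G1 β - Real.cosh (β * na) * G2 β
        + Real.cosh (β * na) * G3 β - Real.sinh (β * na) * G4 β - G0 β)) * hbsq
      + (na * Real.exp (β * a0)) * hsumK β
      + (-(Real.exp (β * a0) * Real.exp (-(β * a0)) * Y0 β)) * hch β
      + (-(Y0 β)) * hE1 β
  · -- derivative of x
    intro β i
    have t1 := ((((hEd β).mul (hSd β)).mul_const (b i)).mul (hG1d β))
    have t2 := (((((hEd β).mul (hCd β)).mul_const (b i)).neg).mul (hG2d β))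
    have t3 := ((((hEd β).mul (hCd β)).mul_const (b i)).mul (hG3d β))
    have t4 := (((((hEd β).mul (hSd β)).mul_const (b i)).neg).mul (hG4d β))
    have t5 := ((((hEd β).mul_const (b i)).neg).mul (hG0d β))
    have t6 := (hEd β).mul (hKd i β)
    have hD := ((((t1.add t2).add t3).add t4).add t5).add t6
    have hxd := hD.congr_of_eventuallyEq (Filter.Eventually.of_forall fun t => hxcf t i)
    convert hxd using 1
    case e'_4 => rfl
    case e'_5 => rfl
    rw [hxcf β i, hx0cf β, hb i]
    simp only [hg1def, hg2def, hg3def, hg4def, hg0def, hkdef, Pi.mul_apply, Pi.neg_apply]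
    linear_combination
      (-(Y β i)) * hE1 β
      + (-(Real.exp (β * a0) * b i * Real.exp (-(β * a0)) * S β)) * hch β
end

section
/- Let ε > 0, γ > 0, let V be a real-valued Schwartz function on ℝ², and let w0, w1, w2, w3 : ℝ²×ℝ² → ℝ be Schwartz functions of (r,p) such that w0(r,−p) = w0(r,p) and w_s(r,−p) = −w_s(r,p) for s = 1,2,3 and all (r,p). Write p⃗ = (p1,p2,0), ∇⃗ = (∂_{r_1}, ∂_{r_2}, 0), w⃗ = (w1,w2,w3), and define T0(w) = (1/(2γ))·p⃗·∇⃗w0 + (ε/2)·∇⃗·w⃗ + Θ_ε(V)w0, and for s = 1,2,3: T_s(w) = (1/(2γ))·p⃗·∇⃗w_s + (ε/2)·∂_{r_s}w0 + Θ_ε(V)w_s + Σ_{j,k} η_{sjk}·w_j·p⃗_k (interpreting ∂_{r_3}w0 = 0). Then for every r ∈ ℝ² and both choices of sign: ∫_{ℝ²} [ T0(w)(r,p) ± (p⃗/|p⃗|)·(T1(w), T2(w), T3(w))(r,p) ] dp = 0. -/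
open MeasureTheory

/-- The Levi-Civita symbol on three indices, with `η 0 1 2 = 1`. -/
def lc : Fin 3 → Fin 3 → Fin 3 → ℝ := fun j s t =>
  if (j, s, t) = (0, 1, 2) ∨ (j, s, t) = (1, 2, 0) ∨ (j, s, t) = (2, 0, 1) then 1
  else if (j, s, t) = (0, 2, 1) ∨ (j, s, t) = (2, 1, 0) ∨ (j, s, t) = (1, 0, 2) then -1
  else 0

noncomputable section

abbrev E2 : Type := EuclideanSpace ℝ (Fin 2)

/-- Partial derivative `∂_{r_s}` of a function on phase space `ℝ²×ℝ²`. -/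
def drF (s : Fin 2) (f : E2 × E2 → ℝ) (x : E2 × E2) : ℝ :=
  fderiv ℝ f x (EuclideanSpace.single s 1, 0)

/-- Partial derivative `∂_{r_j}` for `j = 1,2,3`, with `∂_{r_3} = 0`. -/
def drF3 (j : Fin 3) (f : E2 × E2 → ℝ) (x : E2 × E2) : ℝ :=
  if h : (j : ℕ) < 2 then drF ⟨j, h⟩ f x else 0

/-- The pseudodifferential operator `Θ_ε(V)` applied to a real-valued phase-space function. -/
def ThetaOp (ε : ℝ) (V : SchwartzMap E2 ℝ) (f : E2 × E2 → ℝ) (x : E2 × E2) : ℂ :=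
  (Complex.I / ε) * (((2 * Real.pi) ^ 2)⁻¹ : ℝ) *
    ∫ q : E2 × E2,
      ((V (x.1 + (ε / 2) • q.1) - V (x.1 - (ε / 2) • q.1) : ℝ) : ℂ) * (f (x.1, q.2) : ℂ) *
        Complex.exp (-Complex.I * ((inner ℝ (x.2 - q.2) q.1 : ℝ) : ℂ))

/-! ### Auxiliary lemmas -/

instance negInvProdE2 : (volume : Measure (E2 × E2)).IsNegInvariant := by
  constructor
  have h : MeasurePreserving (fun q : E2 × E2 => -q) volume volume := by
    have := (Measure.measurePreserving_neg (volume : Measure E2)).prod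
      (Measure.measurePreserving_neg (volume : Measure E2))
    exact this
  simpa [Measure.neg] using h.map_eq

lemma integral_odd_eq_zero {F : E2 → ℂ} (h : ∀ p, F (-p) = -F p) :
    ∫ p, F p = 0 := by
  have h1 : ∫ p, F (-p) = ∫ p, F p := integral_neg_eq_self F volume
  simp only [h, integral_neg] at h1
  linear_combination (-1/2 : ℂ) * h1

lemma drF_parity (c : ℝ) (w : SchwartzMap (E2 × E2) ℝ)
    (hw : ∀ r p : E2, w (r, -p) = c * w (r, p)) (s : Fin 2) (r p : E2) :
    drF s (⇑w) (r, -p) = c * drF s (⇑w) (r, p) := by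
  set N : (E2 × E2) →L[ℝ] (E2 × E2) :=
    (ContinuousLinearMap.id ℝ E2).prodMap (-(ContinuousLinearMap.id ℝ E2)) with hNdef
  have hN : ∀ x : E2 × E2, N x = (x.1, -x.2) := fun x => rfl
  have hcomp : (⇑w ∘ ⇑N) = fun x : E2 × E2 => c * w x := by
    funext x
    simp only [Function.comp_apply, hN]
    exact hw x.1 x.2
  have h1 : fderiv ℝ (⇑w ∘ ⇑N) (r, p) = (fderiv ℝ (⇑w) (N (r, p))).comp (N : _) := by
    rw [fderiv_comp _ w.differentiableAt N.differentiableAt, N.fderiv]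
  have h2 : fderiv ℝ (fun x : E2 × E2 => c * w x) (r, p) = c • fderiv ℝ (⇑w) (r, p) :=
    fderiv_const_mul w.differentiableAt c
  have key : (fderiv ℝ (⇑w) (N (r, p))).comp (N : _) = c • fderiv ℝ (⇑w) (r, p) := by
    rw [← h1, hcomp, h2]
  have := congrArg (fun L : (E2 × E2) →L[ℝ] ℝ => L (EuclideanSpace.single s 1, (0 : E2))) key
  simp only [ContinuousLinearMap.coe_comp', Function.comp_apply,
    ContinuousLinearMap.smul_apply, smul_eq_mul] at this
  have hNe : N (EuclideanSpace.single s 1, (0 : E2)) = (EuclideanSpace.single s 1, (0 : E2)) := by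
    rw [hN]; simp
  rw [hNe, hN] at this
  simpa [drF] using this

lemma theta_parity (ε c : ℝ) (V : SchwartzMap E2 ℝ) (f : E2 × E2 → ℝ)
    (hf : ∀ r p : E2, f (r, -p) = c * f (r, p)) (r p : E2) :
    ThetaOp ε V f (r, -p) = (-(c : ℂ)) * ThetaOp ε V f (r, p) := by
  unfold ThetaOp
  have key : (∫ q : E2 × E2,
      ((V (r + (ε / 2) • q.1) - V (r - (ε / 2) • q.1) : ℝ) : ℂ) * (f (r, q.2) : ℂ) *
        Complex.exp (-Complex.I * ((inner ℝ (-p - q.2) q.1 : ℝ) : ℂ)))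
      = (-(c : ℂ)) * ∫ q : E2 × E2,
      ((V (r + (ε / 2) • q.1) - V (r - (ε / 2) • q.1) : ℝ) : ℂ) * (f (r, q.2) : ℂ) *
        Complex.exp (-Complex.I * ((inner ℝ (p - q.2) q.1 : ℝ) : ℂ)) := by
    rw [← integral_neg_eq_self (fun q : E2 × E2 =>
      ((V (r + (ε / 2) • q.1) - V (r - (ε / 2) • q.1) : ℝ) : ℂ) * (f (r, q.2) : ℂ) *
        Complex.exp (-Complex.I * ((inner ℝ (-p - q.2) q.1 : ℝ) : ℂ))) volume,
      ← integral_const_mul]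
    refine integral_congr_ae (Filter.Eventually.of_forall fun q => ?_)
    have e1 : (-q).1 = -q.1 := rfl
    have e2 : (-q).2 = -q.2 := rfl
    have hin : (inner ℝ (-p - (-q).2) ((-q).1) : ℝ) = inner ℝ (p - q.2) q.1 := by
      rw [e1, e2, show (-p - -q.2 : E2) = -(p - q.2) by abel, inner_neg_neg]
    have hf' : f (r, (-q).2) = c * f (r, q.2) := by rw [e2]; exact hf r q.2
    have hV1 : r + (ε / 2) • (-q).1 = r - (ε / 2) • q.1 := by
      rw [e1, smul_neg, ← sub_eq_add_neg]
    have hV2 : r - (ε / 2) • (-q).1 = r + (ε / 2) • q.1 := by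
      rw [e1, smul_neg, sub_neg_eq_add]
    simp only [hin, hf', hV1, hV2]
    push_cast
    ring
  rw [key]
  ring

lemma drF3_parity_even (w : SchwartzMap (E2 × E2) ℝ)
    (hw : ∀ r p : E2, w (r, -p) = w (r, p)) (j : Fin 3) (r p : E2) :
    drF3 j (⇑w) (r, -p) = drF3 j (⇑w) (r, p) := by
  unfold drF3
  split
  · have hw' : ∀ r p : E2, w (r, -p) = (1 : ℝ) * w (r, p) := fun r p => by
      rw [one_mul]; exact hw r p
    simpa using drF_parity 1 w hw' _ r p
  · rfl

/-- the band moments `⟨(Tw)_±⟩` of the scaled graphene Wigner transport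
operator vanish whenever the Wigner function has parity structure
(even, odd, odd, odd) in the momentum variable. -/
theorem transport_band_moments_vanish (ε γ : ℝ) (hε : 0 < ε) (hγ : 0 < γ)
    (V : SchwartzMap E2 ℝ)
    (w0 : SchwartzMap (E2 × E2) ℝ) (wv : Fin 3 → SchwartzMap (E2 × E2) ℝ)
    (hw0 : ∀ r p, w0 (r, -p) = w0 (r, p))
    (hwv : ∀ j : Fin 3, ∀ r p, wv j (r, -p) = -wv j (r, p)) :
    -- the momentum vector p⃗ = (p1, p2, 0)
    let pvec : E2 × E2 → Fin 3 → ℝ := fun x => ![x.2 0, x.2 1, 0]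
    -- T0(w)
    let T0 : E2 × E2 → ℂ := fun x =>
      ((1 / (2 * γ)) * ∑ s : Fin 2, x.2 s * drF s (⇑w0) x : ℝ)
        + ((ε / 2) * (drF 0 (⇑(wv 0)) x + drF 1 (⇑(wv 1)) x) : ℝ)
        + ThetaOp ε V (⇑w0) x
    -- T_s(w) for s = 1,2,3
    let T : Fin 3 → E2 × E2 → ℂ := fun j x =>
      ((1 / (2 * γ)) * ∑ s : Fin 2, x.2 s * drF s (⇑(wv j)) x : ℝ)
        + ((ε / 2) * drF3 j (⇑w0) x : ℝ)
        + ThetaOp ε V (⇑(wv j)) x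
        + ((∑ s : Fin 3, ∑ k : Fin 3, lc j s k * wv s x * pvec x k : ℝ) : ℂ)
    ∀ r : E2,
      (∫ p : E2, (T0 (r, p) +
        ((Real.sqrt (p 0 ^ 2 + p 1 ^ 2))⁻¹ : ℝ) *
          ∑ j : Fin 3, ((pvec (r, p) j : ℝ) : ℂ) * T j (r, p)) = 0) ∧
      (∫ p : E2, (T0 (r, p) -
        ((Real.sqrt (p 0 ^ 2 + p 1 ^ 2))⁻¹ : ℝ) *
          ∑ j : Fin 3, ((pvec (r, p) j : ℝ) : ℂ) * T j (r, p)) = 0) := by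
  intro pvec T0 T r
  have hw0' : ∀ r p : E2, w0 (r, -p) = (1 : ℝ) * w0 (r, p) := fun r p => by
    rw [one_mul]; exact hw0 r p
  have hwv' : ∀ j : Fin 3, ∀ r p : E2, wv j (r, -p) = (-1 : ℝ) * wv j (r, p) := fun j r p => by
    rw [neg_one_mul]; exact hwv j r p
  have hnp : ∀ (p : E2) (s : Fin 2), (-p) s = -(p s) := fun p s => rfl
  have hd0 : ∀ (s : Fin 2) (p : E2), drF s (⇑w0) (r, -p) = drF s (⇑w0) (r, p) := fun s p => by
    simpa using drF_parity 1 w0 hw0' s r p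
  have hdv : ∀ (j : Fin 3) (s : Fin 2) (p : E2),
      drF s (⇑(wv j)) (r, -p) = -drF s (⇑(wv j)) (r, p) := fun j s p => by
    simpa using drF_parity (-1) (wv j) (hwv' j) s r p
  have hth0 : ∀ p : E2, ThetaOp ε V (⇑w0) (r, -p) = -ThetaOp ε V (⇑w0) (r, p) := fun p => by
    simpa using theta_parity ε 1 V (⇑w0) hw0' r p
  have hthv : ∀ (j : Fin 3) (p : E2),
      ThetaOp ε V (⇑(wv j)) (r, -p) = ThetaOp ε V (⇑(wv j)) (r, p) := fun j p => by
    simpa using theta_parity ε (-1) V (⇑(wv j)) (hwv' j) r p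
  have hd3 : ∀ (j : Fin 3) (p : E2), drF3 j (⇑w0) (r, -p) = drF3 j (⇑w0) (r, p) :=
    fun j p => drF3_parity_even w0 hw0 j r p
  have hT0 : ∀ p : E2, T0 (r, -p) = -T0 (r, p) := by
    intro p
    simp only [T0, Fin.sum_univ_two, hnp, hd0, hdv, hth0]
    push_cast
    ring
  have hT : ∀ (j : Fin 3) (p : E2), T j (r, -p) = T j (r, p) := by
    intro j p
    simp only [T, pvec, Fin.sum_univ_two, Fin.sum_univ_three, hnp, hdv, hd3, hthv, hwv,
      Matrix.cons_val_zero, Matrix.cons_val_one, Matrix.head_cons, Matrix.cons_val_two, Matrix.tail_cons]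
    push_cast
    ring
  have hpv : ∀ (j : Fin 3) (p : E2), pvec (r, -p) j = -pvec (r, p) j := by
    intro j p
    fin_cases j <;> simp [pvec, hnp]
  have hs : ∀ p : E2, Real.sqrt ((-p) 0 ^ 2 + (-p) 1 ^ 2) = Real.sqrt (p 0 ^ 2 + p 1 ^ 2) := by
    intro p
    rw [hnp, hnp, neg_sq, neg_sq]
  constructor
  · refine integral_odd_eq_zero fun p => ?_
    simp only [hT0, hT, hpv, hs, Fin.sum_univ_three]
    push_cast
    ring
  · refine integral_odd_eq_zero fun p => ?_
    simp only [hT0, hT, hpv, hs, Fin.sum_univ_three]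
    push_cast
    ring

end
end
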